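/- arXiv:math/0703065 — 2 statements merged into one kernel-verified Lean document; each statement's English description precedes it below -/
import Mathlib

section
/- Let G be a group generated by elements x, y, a₁, b₁, a₂, b₂ subject to (at least) the relations [b₁,b₂]=1, [a₁,b₂]=1, [b₁,a₁]=1, [b₂,a₂]=1, [x,a₁]=1, [y,a₁]=1, [x,a₂]=1, [y,a₂]=1. If additionally the relations b₁ = [a₂⁻¹, a₁⁻¹], x = [b₁⁻¹, y⁻¹], a₁ = [x⁻¹, b₁], b₂ = [b₁, a₂], a₂ = [b₂⁻¹, y⁻¹], and y = [x⁻¹, b₂] hold, then G is the trivial group. -/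
open scoped commutatorElement

theorem stmt_4 {G : Type*} [Group G] (x y a₁ b₁ a₂ b₂ : G)
    (hgen : Subgroup.closure ({x, y, a₁, b₁, a₂, b₂} : Set G) = ⊤)
    (h1 : ⁅b₁, b₂⁆ = 1) (h2 : ⁅a₁, b₂⁆ = 1) (h3 : ⁅b₁, a₁⁆ = 1) (h4 : ⁅b₂, a₂⁆ = 1)
    (h5 : ⁅x, a₁⁆ = 1) (h6 : ⁅y, a₁⁆ = 1) (h7 : ⁅x, a₂⁆ = 1) (h8 : ⁅y, a₂⁆ = 1)
    (r1 : b₁ = ⁅a₂⁻¹, a₁⁻¹⁆) (r2 : x = ⁅b₁⁻¹, y⁻¹⁆) (r3 : a₁ = ⁅x⁻¹, b₁⁆)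
    (r4 : b₂ = ⁅b₁, a₂⁆) (r5 : a₂ = ⁅b₂⁻¹, y⁻¹⁆) (r6 : y = ⁅x⁻¹, b₂⁆) :
    ∀ g : G, g = 1 := by
  rw [commutatorElement_eq_one_iff_mul_comm] at h2 h4 h6
  -- conjugation by y⁻¹ fixes a₁
  have e1 : y⁻¹ * a₁ * y = a₁ := by
    rw [mul_assoc, ← h6]; group
  -- conjugation by y⁻¹ sends b₂ to b₂ * a₂
  have e2 : y⁻¹ * b₂ * y = b₂ * a₂ := by
    rw [r5]; group
  -- hence a₁ and a₂ commute
  have c12 : a₁ * a₂ = a₂ * a₁ := by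
    have key : (y⁻¹ * a₁ * y) * (y⁻¹ * b₂ * y) = (y⁻¹ * b₂ * y) * (y⁻¹ * a₁ * y) := by
      have : y⁻¹ * (a₁ * b₂) * y = y⁻¹ * (b₂ * a₁) * y := by rw [h2]
      calc (y⁻¹ * a₁ * y) * (y⁻¹ * b₂ * y) = y⁻¹ * (a₁ * b₂) * y := by group
        _ = y⁻¹ * (b₂ * a₁) * y := this
        _ = (y⁻¹ * b₂ * y) * (y⁻¹ * a₁ * y) := by group
    rw [e1, e2] at key
    -- key : a₁ * (b₂ * a₂) = b₂ * a₂ * a₁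
    have : b₂ * (a₁ * a₂) = b₂ * (a₂ * a₁) := by
      calc b₂ * (a₁ * a₂) = (a₁ * b₂) * a₂ := by rw [h2]; group
        _ = a₁ * (b₂ * a₂) := by group
        _ = b₂ * a₂ * a₁ := key
        _ = b₂ * (a₂ * a₁) := by group
    exact mul_left_cancel this
  have hb₁ : b₁ = 1 := by
    rw [r1, commutatorElement_eq_one_iff_mul_comm]
    rw [← mul_inv_rev, ← mul_inv_rev, c12]
  have hx : x = 1 := by rw [r2, hb₁]; group
  have ha₁ : a₁ = 1 := by rw [r3, hb₁]; group
  have hb₂ : b₂ = 1 := by rw [r4, hb₁]; group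
  have ha₂ : a₂ = 1 := by rw [r5, hb₂]; group
  have hy : y = 1 := by rw [r6, hb₂]; group
  intro g
  have hg : g ∈ Subgroup.closure ({x, y, a₁, b₁, a₂, b₂} : Set G) := by
    rw [hgen]; trivial
  have hle : Subgroup.closure ({x, y, a₁, b₁, a₂, b₂} : Set G) ≤ ⊥ := by
    rw [Subgroup.closure_le]
    intro z hz
    simp only [Set.mem_insert_iff, Set.mem_singleton_iff] at hz
    rcases hz with h|h|h|h|h|h <;> subst h <;>
      simp [hx, hy, ha₁, hb₁, ha₂, hb₂, Subgroup.mem_bot]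
  exact Subgroup.mem_bot.mp (hle hg)
end

section
/- Let G be a group generated by x, y, a₁, b₁, a₂, b₂ subject to the relations [b₁,b₂]=1, [a₁,b₂]=1, [b₁,a₁]=1, [b₂,a₂]=1, [x,a₁]=1, [y,a₁]=1, [x,a₂]=1, [y,a₂]=1, together with b₁ = [a₂⁻¹,a₁⁻¹], x = [b₁⁻¹,y⁻¹], a₁ = [x⁻¹,b₁], b₂ = [b₁,a₂], and a₂ = [b₂⁻¹,y⁻¹]. Then G is generated by y alone; in particular G is cyclic (a quotient of ℤ). -/
open scoped commutatorElement

theorem stmt_5 {G : Type*} [Group G] (x y a₁ b₁ a₂ b₂ : G)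
    (hgen : Subgroup.closure ({x, y, a₁, b₁, a₂, b₂} : Set G) = ⊤)
    (h1 : ⁅b₁, b₂⁆ = 1) (h2 : ⁅a₁, b₂⁆ = 1) (h3 : ⁅b₁, a₁⁆ = 1) (h4 : ⁅b₂, a₂⁆ = 1)
    (h5 : ⁅x, a₁⁆ = 1) (h6 : ⁅y, a₁⁆ = 1) (h7 : ⁅x, a₂⁆ = 1) (h8 : ⁅y, a₂⁆ = 1)
    (r1 : b₁ = ⁅a₂⁻¹, a₁⁻¹⁆) (r2 : x = ⁅b₁⁻¹, y⁻¹⁆) (r3 : a₁ = ⁅x⁻¹, b₁⁆)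
    (r4 : b₂ = ⁅b₁, a₂⁆) (r5 : a₂ = ⁅b₂⁻¹, y⁻¹⁆) :
    Subgroup.closure ({y} : Set G) = ⊤ := by
  have c1 : Commute a₁ b₂ := commutatorElement_eq_one_iff_mul_comm.mp h2
  have c2 : Commute a₁ y := (commutatorElement_eq_one_iff_mul_comm.mp h6).symm
  have ca : Commute a₁ a₂ := by
    rw [r5, commutatorElement_def, inv_inv, inv_inv, mul_assoc, mul_assoc]
    exact c1.inv_right.mul_right (c2.inv_right.mul_right (c1.mul_right c2))
  have hb1 : b₁ = 1 := by
    rw [r1]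
    exact commutatorElement_eq_one_iff_mul_comm.mpr (ca.symm.inv_inv)
  have hx : x = 1 := by simp [r2, hb1]
  have ha1 : a₁ = 1 := by simp [r3, hb1]
  have hb2 : b₂ = 1 := by simp [r4, hb1]
  have ha2 : a₂ = 1 := by simp [r5, hb2]
  rw [eq_top_iff, ← hgen, Subgroup.closure_le]
  intro g hg
  simp only [Set.mem_insert_iff, Set.mem_singleton_iff] at hg
  rcases hg with rfl | rfl | rfl | rfl | rfl | rfl
  · rw [hx]; exact one_mem _
  · exact Subgroup.subset_closure rfl
  · rw [ha1]; exact one_mem _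
  · rw [hb1]; exact one_mem _
  · rw [ha2]; exact one_mem _
  · rw [hb2]; exact one_mem _
end
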